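/- arXiv:2604.15158 — 4 statements merged into one kernel-verified Lean document; each statement's English description precedes it below -/
import Mathlib

section
/- Let F = 𝔽_q be a finite field, K = 𝔽_{q^m} a degree-m extension, and G a finite group. If C ⊆ KG is a left FG-submodule of the group algebra KG (an additive left group code), then its orthogonal complement C^⊥ with respect to the trace-Euclidean form ⟨x,y⟩_TE = Tr_{K/F}(Σ_{g∈G} x_g y_g) is again a left FG-submodule of KG. -/
open MonoidAlgebra

/-- The trace-Euclidean form on the group algebra `KG`:
`⟨x,y⟩_TE = Tr_{K/F}(Σ_{g∈G} x_g y_g)`. -/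
noncomputable def TE (F : Type) {K G : Type} [Field F] [Field K] [Algebra F K]
    [Fintype G] (x y : MonoidAlgebra K G) : F :=
  Algebra.trace F K (∑ g : G, x.coeff g * y.coeff g)

/-- The involution of `KG` induced by inversion in `G`:
`(Σ a_g g)* = Σ a_g g⁻¹`, i.e. the coefficient of `g` in `a*` is `a (g⁻¹)`. -/
def starG {K G : Type} [Semiring K] [Group G] (a : MonoidAlgebra K G) : MonoidAlgebra K G :=
  MonoidAlgebra.ofCoeff (Finsupp.equivMapDomain (Equiv.inv G) a.coeff)

/-- The coefficientwise embedding of the group algebra `FG` into `KG`. -/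
noncomputable def fgMap (F K G : Type) [Field F] [Field K] [Algebra F K] [Group G] :
    MonoidAlgebra F G →ₐ[F] MonoidAlgebra K G :=
  MonoidAlgebra.lift F (MonoidAlgebra K G) G (MonoidAlgebra.of K G)

/-- `KG` as a left `FG`-module via the coefficientwise embedding `FG ⊆ KG`
followed by left multiplication. -/
noncomputable instance fgModule (F K G : Type) [Field F] [Field K] [Algebra F K] [Group G] :
    Module (MonoidAlgebra F G) (MonoidAlgebra K G) :=
  Module.compHom _ (fgMap F K G).toRingHom

section Aux

variable {F K G : Type} [Field F] [Field K] [Algebra F K] [Group G]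

lemma starG_apply (a : MonoidAlgebra K G) (g : G) : (starG a).coeff g = a.coeff g⁻¹ := rfl

lemma starG_single (h : G) (r : K) :
    starG (MonoidAlgebra.single h r) = MonoidAlgebra.single h⁻¹ r := by
  classical
  ext g
  simp [starG_apply, MonoidAlgebra.coeff_single, Finsupp.single_apply, inv_eq_iff_eq_inv]

lemma fgMap_single (h : G) (r : F) :
    fgMap F K G (MonoidAlgebra.single h r) = MonoidAlgebra.single h (algebraMap F K r) := by
  simp [fgMap, MonoidAlgebra.lift_single, MonoidAlgebra.of_apply, Finsupp.smul_single,
    Algebra.smul_def]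

lemma key [Fintype G] (u x c : MonoidAlgebra K G) :
    ∑ g : G, (u * x).coeff g * c.coeff g = ∑ g : G, x.coeff g * (starG u * c).coeff g := by
  induction u using MonoidAlgebra.induction_linear with
  | zero => simp [starG]
  | add a b ha hb =>
      have h : starG (a + b) = starG a + starG b := by ext g; rfl
      have hs : ∀ (u v : MonoidAlgebra K G) (g : G), (u + v).coeff g = u.coeff g + v.coeff g := fun _ _ _ => rfl
      simp only [add_mul, h, hs, mul_add, Finset.sum_add_distrib, ha, hb]
  | single a r =>
      rw [starG_single]
      simp only [MonoidAlgebra.coeff_single_mul_apply, inv_inv]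
      exact (Fintype.sum_equiv (Equiv.mulLeft a) _ _
        (fun g => by simp only [Equiv.coe_mulLeft, inv_mul_cancel_left]; ring)).symm

lemma fgMap_apply (a : MonoidAlgebra F G) (g : G) :
    (fgMap F K G a).coeff g = algebraMap F K (a.coeff g) := by
  induction a using MonoidAlgebra.induction_linear with
  | zero => simp
  | add u v hu hv =>
      have hs : ∀ {R : Type} [Semiring R] (u v : MonoidAlgebra R G) (g : G),
          (u + v).coeff g = u.coeff g + v.coeff g := fun _ _ _ => rfl
      rw [map_add, hs, hs, hu, hv, map_add]
  | single h r =>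
      classical
      rw [fgMap_single, MonoidAlgebra.coeff_single, MonoidAlgebra.coeff_single, Finsupp.single_apply, Finsupp.single_apply]
      split <;> simp

lemma starG_fgMap (a : MonoidAlgebra F G) :
    starG (fgMap F K G a) = fgMap F K G (starG a) := by
  ext g
  rw [starG_apply, fgMap_apply, fgMap_apply, starG_apply]

end Aux

/-- If `C ⊆ KG` is a left `FG`-submodule (an additive left group code), then its
orthogonal complement with respect to the trace-Euclidean form is again a left
`FG`-submodule of `KG`. -/
theorem te_dual_is_additive_group_code
    (F K G : Type) [Field F] [Fintype F] [Field K] [Fintype K] [Algebra F K]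
    [FiniteDimensional F K] [Group G] [Fintype G]
    (C : Submodule (MonoidAlgebra F G) (MonoidAlgebra K G)) :
    ∃ D : Submodule (MonoidAlgebra F G) (MonoidAlgebra K G),
      (D : Set (MonoidAlgebra K G)) = {x | ∀ c ∈ C, TE F x c = 0} := by
  have hs : ∀ (u v : MonoidAlgebra K G) (g : G), (u + v).coeff g = u.coeff g + v.coeff g := fun _ _ _ => rfl
  have hsmul : ∀ (a : MonoidAlgebra F G) (x : MonoidAlgebra K G),
      a • x = fgMap F K G a * x := fun _ _ => rfl
  refine ⟨{ carrier := {x | ∀ c ∈ C, TE F x c = 0}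
            zero_mem' := ?_
            add_mem' := ?_
            smul_mem' := ?_ }, rfl⟩
  · intro x y hx hy c hc
    have : TE F (x + y) c = TE F x c + TE F y c := by
      simp [TE, hs, add_mul, Finset.sum_add_distrib]
    rw [this, hx c hc, hy c hc, add_zero]
  · intro c hc
    have : ∀ g : G, (0 : MonoidAlgebra K G).coeff g = 0 := fun _ => rfl
    simp [TE, this]
  · intro a x hx c hc
    rw [hsmul]
    have : TE F (fgMap F K G a * x) c = TE F x (fgMap F K G (starG a) * c) := by
      rw [TE, TE, key, starG_fgMap]
    rw [this, ← hsmul]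
    exact hx _ (C.smul_mem _ hc)
end

section
/- Let F = 𝔽_q be a finite field, K = 𝔽_{q^m} a degree-m extension, and G a finite group. If C ⊆ KG is a left ideal of the group algebra KG, then the Euclidean orthogonal and the trace-Euclidean orthogonal of C coincide: C^⊥_E = C^⊥_TE. -/
open MonoidAlgebra

/-- If `C` is a left ideal of `KG`, then the Euclidean orthogonal and the
trace-Euclidean orthogonal of `C` coincide: `C^⊥_E = C^⊥_TE`. -/
theorem euclidean_dual_eq_trace_euclidean_dual_of_left_ideal
    (F K G : Type) [Field F] [Fintype F] [Field K] [Fintype K] [Algebra F K]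
    [FiniteDimensional F K] [Group G] [Fintype G]
    (C : Ideal (MonoidAlgebra K G)) :
    {x : MonoidAlgebra K G | ∀ c ∈ C, (∑ g : G, x.coeff g * c.coeff g) = 0} =
      {x : MonoidAlgebra K G | ∀ c ∈ C, TE F x c = 0} := by
  ext x
  simp only [Set.mem_setOf_eq]
  constructor
  · intro h c hc
    rw [TE, h c hc, map_zero]
  · intro h c hc
    have key : ∀ k : K, Algebra.trace F K ((∑ g : G, x.coeff g * c.coeff g) * k) = 0 := by
      intro k
      have hc' : (MonoidAlgebra.single (1 : G) k) * c ∈ C := Ideal.mul_mem_left _ _ hc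
      have := h _ hc'
      rw [TE] at this
      have heq : (∑ g : G, x.coeff g * ((MonoidAlgebra.single (1 : G) k) * c).coeff g)
          = (∑ g : G, x.coeff g * c.coeff g) * k := by
        rw [Finset.sum_mul]
        refine Finset.sum_congr rfl fun g _ => ?_
        rw [MonoidAlgebra.single_one_mul_apply]
        ring
      rwa [heq] at this
    exact (traceForm_nondegenerate F K).1 (∑ g : G, x.coeff g * c.coeff g)
      (fun k => by rw [Algebra.traceForm_apply]; exact key k)
end

section
/- Let F = 𝔽_q be a finite field, K = 𝔽_{q^m} a degree-m extension, and G a finite group. Let C ≤ KG be a left ideal of the group algebra KG. Then C is Euclidean LCD (i.e. C ∩ C^⊥_E = {0} with respect to the Euclidean form) if and only if C = KGe for some idempotent e ∈ KG with e = e*, where * is the involution of KG induced by inversion in G. -/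
open MonoidAlgebra

namespace LCDaux

variable {K G : Type} [Field K] [Group G] [Fintype G]

set_option linter.unusedSectionVars false

lemma MA_add_apply (a b : MonoidAlgebra K G) (g : G) : (a + b).coeff g = a.coeff g + b.coeff g := rfl

lemma MA_zero_apply (g : G) : (0 : MonoidAlgebra K G).coeff g = 0 := rfl

lemma MA_smul_apply (c : K) (a : MonoidAlgebra K G) (g : G) : (c • a).coeff g = c * a.coeff g := rfl

lemma starG_apply (a : MonoidAlgebra K G) (g : G) : (starG a).coeff g = a.coeff g⁻¹ := rfl

lemma starG_add (a b : MonoidAlgebra K G) : starG (a + b) = starG a + starG b := by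
  ext g; rw [starG_apply, MA_add_apply, MA_add_apply, starG_apply, starG_apply]

lemma starG_zero : starG (0 : MonoidAlgebra K G) = 0 := by ext g; rw [starG_apply, MA_zero_apply, MA_zero_apply]

lemma starG_single (g : G) (r : K) :
    starG (MonoidAlgebra.single g r) = MonoidAlgebra.single g⁻¹ r := by
  classical
  ext h
  rw [starG_apply, coeff_single, coeff_single]
  show Finsupp.single g r h⁻¹ = Finsupp.single g⁻¹ r h
  simp only [Finsupp.single_apply]
  congr 1
  apply propext
  constructor <;> · rintro rfl; simp

lemma starG_starG (a : MonoidAlgebra K G) : starG (starG a) = a := by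
  ext g; simp [starG_apply]

lemma starG_mul (a b : MonoidAlgebra K G) : starG (a * b) = starG b * starG a := by
  induction a using MonoidAlgebra.induction_linear with
  | zero => rw [zero_mul, starG_zero, mul_zero]
  | add x y hx hy => rw [add_mul, starG_add, hx, hy, starG_add, mul_add]
  | single g r =>
    induction b using MonoidAlgebra.induction_linear with
    | zero => rw [mul_zero, starG_zero, zero_mul]
    | add x y hx hy => rw [mul_add, starG_add, hx, hy, starG_add, add_mul]
    | single h s =>
      rw [MonoidAlgebra.single_mul_single, starG_single, starG_single, starG_single,
        MonoidAlgebra.single_mul_single, mul_inv_rev, mul_comm s r]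

lemma E_eq (x y : MonoidAlgebra K G) : ∑ g : G, x.coeff g * y.coeff g = (x * starG y).coeff 1 := by
  induction x using MonoidAlgebra.induction_linear with
  | zero =>
    simp only [MA_zero_apply, zero_mul, Finset.sum_const_zero]
  | add x x' hx hx' =>
    simp only [MA_add_apply, Finsupp.add_apply, add_mul, Finset.sum_add_distrib, hx, hx']
  | single g r =>
    induction y using MonoidAlgebra.induction_linear with
    | zero =>
      simp only [MA_zero_apply, mul_zero, Finset.sum_const_zero, starG_zero, mul_zero]
    | add y y' hy hy' =>
      have hs : starG (y + y') = starG y + starG y' := starG_add y y'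
      rw [hs, mul_add, MA_add_apply, ← hy, ← hy']
      simp only [MA_add_apply, mul_add, Finset.sum_add_distrib]
    | single h s =>
      rw [starG_single, MonoidAlgebra.single_mul_single]
      classical
      show (∑ k : G, Finsupp.single g r k * Finsupp.single h s k) =
        Finsupp.single (g * h⁻¹) (r * s) 1
      simp only [Finsupp.single_apply]
      rw [Finset.sum_eq_single h]
      · by_cases hgh : g = h
        · subst hgh; simp
        · simp [hgh, show ¬ g * h⁻¹ = 1 from by simpa [mul_inv_eq_one] using hgh]
      · intro b _ hb
        simp [Ne.symm hb]
      · simp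

/-- Key algebraic lemma: if `x` is Euclidean-orthogonal to the left ideal `C`
and `c ∈ C`, then `x * (starG c) = 0`. -/
lemma mul_starG_eq_zero {C : Ideal (MonoidAlgebra K G)} {x c : MonoidAlgebra K G}
    (hx : ∀ c ∈ C, (∑ g : G, x.coeff g * c.coeff g) = 0) (hc : c ∈ C) : x * starG c = 0 := by
  ext h
  have hmem : MonoidAlgebra.single h (1 : K) * c ∈ C := by
    simpa [smul_eq_mul] using C.smul_mem (MonoidAlgebra.single h (1 : K)) hc
  have key := hx _ hmem
  rw [E_eq] at key
  rw [starG_mul, starG_single, ← mul_assoc] at key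
  rw [MonoidAlgebra.coeff_mul_single_apply] at key
  simpa using key

/-- The Euclidean bilinear form on `MonoidAlgebra K G` as a `BilinForm`. -/
noncomputable def Eb (K G : Type) [Field K] [Group G] [Fintype G] :
    LinearMap.BilinForm K (MonoidAlgebra K G) :=
  LinearMap.mk₂ K (fun x y => ∑ g : G, x.coeff g * y.coeff g)
    (fun a a' b => by simp only [MA_add_apply, add_mul, Finset.sum_add_distrib])
    (fun c a b => by
      simp only [MA_smul_apply, smul_eq_mul, Finset.mul_sum, mul_assoc])
    (fun a b b' => by simp only [MA_add_apply, mul_add, Finset.sum_add_distrib])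
    (fun c a b => by
      simp only [MA_smul_apply, smul_eq_mul, Finset.mul_sum]
      exact Finset.sum_congr rfl fun g _ => by ring)

lemma Eb_apply (x y : MonoidAlgebra K G) : Eb K G x y = ∑ g : G, x.coeff g * y.coeff g := rfl

lemma Eb_symm (x y : MonoidAlgebra K G) : Eb K G x y = Eb K G y x := by
  simp only [Eb_apply, mul_comm]

lemma Eb_refl : (Eb K G).IsRefl := fun x y h => by rwa [Eb_symm] at h

lemma Eb_nondeg : (Eb K G).Nondegenerate := by
  have hL : ∀ x : MonoidAlgebra K G, (∀ y, Eb K G x y = 0) → x = 0 := by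
    intro x hx
    ext g
    have := hx (MonoidAlgebra.single g 1)
    classical
    rw [Eb_apply] at this
    simpa [coeff_single, Finsupp.single_apply, mul_ite, eq_comm, Finset.sum_ite_eq'] using this
  exact ⟨hL, fun x hx => hL x fun y => by rw [Eb_symm]; exact hx y⟩

instance : Module.Finite K (MonoidAlgebra K G) :=
  Module.Finite.equiv ((Finsupp.linearEquivFunOnFinite K K G).symm.trans (MonoidAlgebra.coeffLinearEquiv K).symm)

end LCDaux

open LCDaux in
/-- A left ideal `C` of `KG` is Euclidean LCD (`C ∩ C^⊥_E = {0}`) if and only if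
`C = KGe` for some idempotent `e ∈ KG` with `e = e*`, where `*` is the
involution induced by inversion in `G`. -/
theorem euclidean_lcd_iff_selfadjoint_idempotent
    (F K G : Type) [Field F] [Fintype F] [Field K] [Fintype K] [Algebra F K]
    [FiniteDimensional F K] [Group G] [Fintype G]
    (C : Ideal (MonoidAlgebra K G)) :
    ((C : Set (MonoidAlgebra K G)) ∩
        {x | ∀ c ∈ C, (∑ g : G, x.coeff g * c.coeff g) = 0} = {0}) ↔
    (∃ e : MonoidAlgebra K G, e * e = e ∧ starG e = e ∧ C = Ideal.span {e}) := by
  constructor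
  · intro h
    set W : Submodule K (MonoidAlgebra K G) := C.restrictScalars K with hW
    have hmemW : ∀ x, x ∈ W ↔ x ∈ C := fun x => Iff.rfl
    have hdisj : Disjoint W ((Eb K G).orthogonal W) := by
      rw [Submodule.disjoint_def]
      intro x hxW hxO
      have hxset : x ∈ (C : Set (MonoidAlgebra K G)) ∩
          {x | ∀ c ∈ C, (∑ g : G, x.coeff g * c.coeff g) = 0} := by
        refine ⟨hxW, fun c hc => ?_⟩
        have := hxO c ((hmemW c).mpr hc)
        rw [Eb_symm, Eb_apply] at this
        exact this
      rw [h] at hxset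
      exact hxset
    have hcompl : IsCompl W ((Eb K G).orthogonal W) :=
      ((Eb K G).isCompl_orthogonal_iff_disjoint Eb_refl).mpr hdisj
    have h1 : (1 : MonoidAlgebra K G) ∈ W ⊔ (Eb K G).orthogonal W := by
      rw [hcompl.sup_eq_top]; trivial
    obtain ⟨e, heW, f, hfO, hef⟩ := Submodule.mem_sup.mp h1
    have heC : e ∈ C := (hmemW e).mp heW
    -- f is orthogonal to C (in the sense of the statement's set)
    have hfset : ∀ c ∈ C, (∑ g : G, f.coeff g * c.coeff g) = 0 := by
      intro c hc
      have := hfO c ((hmemW c).mpr hc)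
      rw [Eb_symm, Eb_apply] at this
      exact this
    -- every x ∈ C satisfies x * e = x
    have hxe : ∀ x ∈ C, x * e = x := by
      intro x hx
      have hsum : x * e + x * f = x := by rw [← mul_add, hef, mul_one]
      have hxf0 : x * f = 0 := by
        have hxfset : x * f ∈ (C : Set (MonoidAlgebra K G)) ∩
            {y | ∀ c ∈ C, (∑ g : G, y.coeff g * c.coeff g) = 0} := by
          constructor
          · have hsub : x * f = x - x * e := eq_sub_of_add_eq' hsum
            rw [hsub]
            exact C.sub_mem hx (by simpa [smul_eq_mul] using C.smul_mem x heC)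
          · intro c hc
            rw [E_eq, mul_assoc, mul_starG_eq_zero hfset hc, mul_zero]
            rfl
        rw [h] at hxfset
        exact hxfset
      rw [hxf0, add_zero] at hsum
      exact hsum
    have hee : e * e = e := hxe e heC
    have hf : f = 1 - e := eq_sub_of_add_eq' hef
    have hfse : f * starG e = 0 := mul_starG_eq_zero hfset heC
    have hstar1 : starG e = e * starG e := by
      rw [hf, sub_mul, one_mul, sub_eq_zero] at hfse
      exact hfse
    have hstar : starG e = e := by
      calc starG e = e * starG e := hstar1
        _ = starG (starG e) * starG e := by rw [starG_starG]
        _ = starG (e * starG e) := (starG_mul _ _).symm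
        _ = starG (starG e) := by rw [← hstar1]
        _ = e := starG_starG e
    refine ⟨e, hee, hstar, le_antisymm ?_ ?_⟩
    · intro x hx
      rw [← hxe x hx]
      exact Ideal.mem_span_singleton'.mpr ⟨x, rfl⟩
    · rw [Ideal.span_le, Set.singleton_subset_iff]
      exact heC
  · rintro ⟨e, hee, hse, rfl⟩
    apply Set.eq_singleton_iff_unique_mem.mpr
    constructor
    · exact ⟨Ideal.zero_mem _, fun c _ => by
        simp only [MA_zero_apply, zero_mul, Finset.sum_const_zero]⟩
    · rintro x ⟨hxC, hxO⟩
      have hxe0 : x * starG e = 0 :=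
        mul_starG_eq_zero hxO (Ideal.subset_span (Set.mem_singleton e))
      rw [hse] at hxe0
      obtain ⟨a, ha⟩ := Ideal.mem_span_singleton'.mp hxC
      calc x = a * e := ha.symm
        _ = a * (e * e) := by rw [hee]
        _ = x * e := by rw [← mul_assoc, ha]
        _ = 0 := hxe0
end

section
/- Let F = 𝔽_q be a finite field, K = 𝔽_{q^m} a degree-m extension, and G a finite group. Suppose U is a nonzero proper F-subspace of K such that K = U ⊕ U^⊥, where U^⊥ is the orthogonal of U in K with respect to the form ⟨α,β⟩ = Tr_{K/F}(αβ). Let π_U : K → K be the projection onto U along U^⊥, and define P : KG → KG coefficientwise by P(Σ_g λ_g g) = Σ_g π_U(λ_g) g. Then P is an FG-linear projector (P² = P) that is self-adjoint with respect to the trace-Euclidean form on KG, its image is Im(P) = {Σ_g u_g g : u_g ∈ U} and this image is a TE-LCD additive left group code, and P is not equal to right multiplication by any element of KG. -/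
open MonoidAlgebra

/-- Let `U` be a nonzero proper `F`-subspace of `K` with `K = U ⊕ U^⊥` for the
form `⟨α,β⟩ = Tr_{K/F}(αβ)`, let `π` be the projection onto `U` along `U^⊥`, and
let `P` act on `KG` coefficientwise by `π`.  Then `P` is an `FG`-linear
projector, self-adjoint with respect to the trace-Euclidean form, its image is
`UG = {Σ u_g g : u_g ∈ U}`, this image is a TE-LCD additive left group code, and
`P` is not right multiplication by any element of `KG`. -/
theorem coefficientwise_projector_lcd
    (F K G : Type) [Field F] [Fintype F] [Field K] [Fintype K] [Algebra F K]
    [FiniteDimensional F K] [Group G] [Fintype G]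
    (U Uperp : Submodule F K) (hU0 : U ≠ ⊥) (hU1 : U ≠ ⊤)
    (hperp : ∀ β : K, β ∈ Uperp ↔ ∀ α ∈ U, Algebra.trace F K (α * β) = 0)
    (hcompl : IsCompl U Uperp)
    (π : K →ₗ[F] K) (hπU : ∀ u ∈ U, π u = u) (hπperp : ∀ w ∈ Uperp, π w = 0)
    (P : MonoidAlgebra K G →ₗ[F] MonoidAlgebra K G)
    (hP : ∀ (x : MonoidAlgebra K G) (g : G), (P x).coeff g = π (x.coeff g)) :
    (∀ (a : MonoidAlgebra F G) (x : MonoidAlgebra K G), P (a • x) = a • P x) ∧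
    P ∘ₗ P = P ∧
    (∀ x y : MonoidAlgebra K G, TE F (P x) y = TE F x (P y)) ∧
    ((LinearMap.range P : Set (MonoidAlgebra K G)) = {x | ∀ g : G, x.coeff g ∈ U}) ∧
    ((LinearMap.range P : Set (MonoidAlgebra K G)) ∩
        {x | ∀ c ∈ LinearMap.range P, TE F x c = 0} = {0}) ∧
    (¬ ∃ a : MonoidAlgebra K G, ∀ x : MonoidAlgebra K G, P x = x * a) := by

  -- basic facts about the projection π
  have hdec : ∀ v : K, ∃ u ∈ U, ∃ w ∈ Uperp, v = u + w := by
    intro v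
    have hv : v ∈ U ⊔ Uperp := by rw [hcompl.sup_eq_top]; trivial
    obtain ⟨u, hu, w, hw, h⟩ := Submodule.mem_sup.mp hv
    exact ⟨u, hu, w, hw, h.symm⟩
  have hπ_mem : ∀ v : K, π v ∈ U := by
    intro v
    obtain ⟨u, hu, w, hw, rfl⟩ := hdec v
    rw [map_add, hπU u hu, hπperp w hw, add_zero]
    exact hu
  have hπ_val : ∀ v : K, ∀ u ∈ U, ∀ w ∈ Uperp, v = u + w → π v = u := by
    intro v u hu w hw h
    subst h
    rw [map_add, hπU u hu, hπperp w hw, add_zero]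
  have hπ_sub : ∀ v : K, v - π v ∈ Uperp := by
    intro v
    obtain ⟨u, hu, w, hw, rfl⟩ := hdec v
    rw [hπ_val (u + w) u hu w hw rfl, add_sub_cancel_left]
    exact hw
  have hπ_smul : ∀ (c : F) (v : K), π (algebraMap F K c * v) = algebraMap F K c * π v := by
    intro c v
    rw [← Algebra.smul_def, ← Algebra.smul_def, map_smul]
  -- key trace identity
  have htr : ∀ a b : K, Algebra.trace F K (π a * b) = Algebra.trace F K (a * π b) := by
    intro a b
    have h1 : π a * b = π a * π b + π a * (b - π b) := by ring
    have h2 : a * π b = π a * π b + π b * (a - π a) := by ring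
    rw [h1, h2, map_add, map_add]
    congr 1
    · exact ((hperp _).mp (hπ_sub b) _ (hπ_mem a)).trans
        (((hperp _).mp (hπ_sub a) _ (hπ_mem b)).symm)
  refine ⟨?_, ?_, ?_, ?_, ?_, ?_⟩
  · -- FG-linearity
    intro a x
    have key : ∀ (h : G) (c : F),
        P ((MonoidAlgebra.single h c : MonoidAlgebra F G) • x)
          = (MonoidAlgebra.single h c : MonoidAlgebra F G) • P x := by
      intro h c
      have hfg : fgMap F K G (MonoidAlgebra.single h c)
          = MonoidAlgebra.single h (algebraMap F K c) := by
        simp only [fgMap, MonoidAlgebra.lift_single, MonoidAlgebra.of_apply]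
        rw [MonoidAlgebra.smul_single, Algebra.smul_def, mul_one]
      have hsm : ∀ y : MonoidAlgebra K G,
          (MonoidAlgebra.single h c : MonoidAlgebra F G) • y
            = MonoidAlgebra.single h (algebraMap F K c) * y := by
        intro y
        show fgMap F K G (MonoidAlgebra.single h c) * y = _
        rw [hfg]
      ext g
      rw [hP, hsm, hsm, MonoidAlgebra.single_mul_apply, MonoidAlgebra.single_mul_apply,
        hπ_smul, hP]
    induction a using MonoidAlgebra.induction with
    | zero => simp [zero_smul, map_zero]
    | single_add h c a _ _ ih =>
        rw [add_smul, add_smul, map_add, key, ih]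
  · -- projector
    apply LinearMap.ext
    intro x
    ext g
    rw [LinearMap.comp_apply, hP, hP, hπU _ (hπ_mem _)]
  · -- self-adjoint
    intro x y
    simp only [TE, hP, map_sum]
    exact Finset.sum_congr rfl fun g _ => htr (x.coeff g) (y.coeff g)
  · -- range
    ext x
    constructor
    · rintro ⟨y, rfl⟩ g
      rw [hP]; exact hπ_mem _
    · intro hx
      refine ⟨x, ?_⟩
      ext g
      rw [hP, hπU _ (hx g)]
  · -- LCD
    ext x
    simp only [Set.mem_inter_iff, Set.mem_setOf_eq, Set.mem_singleton_iff]
    constructor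
    · rintro ⟨hx1, hx2⟩
      have hxU : ∀ g : G, x.coeff g ∈ U := by
        intro g
        obtain ⟨y, rfl⟩ := hx1
        rw [hP]; exact hπ_mem _
      ext g
      have hsingle : ∀ u ∈ U, (MonoidAlgebra.single g u : MonoidAlgebra K G)
          ∈ (LinearMap.range P : Set (MonoidAlgebra K G)) := by
        intro u hu
        refine ⟨MonoidAlgebra.single g u, ?_⟩
        classical
        ext g'
        rw [hP, MonoidAlgebra.single_apply]
        split_ifs with hh
        · exact hπU u hu
        · exact map_zero π
      have hval : ∀ u ∈ U, Algebra.trace F K (x.coeff g * u) = 0 := by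
        intro u hu
        classical
        have hsum : (∑ g' : G, x.coeff g' * (MonoidAlgebra.single g u : MonoidAlgebra K G).coeff g')
            = x.coeff g * u := by
          rw [Finset.sum_eq_single g]
          · rw [MonoidAlgebra.single_apply, if_pos rfl]
          · intro b _ hb
            rw [MonoidAlgebra.single_apply, if_neg (fun h => hb h.symm), mul_zero]
          · intro h; exact absurd (Finset.mem_univ g) h
        have h0 := hx2 _ (hsingle u hu)
        rw [TE, hsum] at h0
        exact h0
      have hperp' : x.coeff g ∈ Uperp := by
        rw [hperp]
        intro α hα
        rw [mul_comm]
        exact hval α hα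
      have : x.coeff g ∈ U ⊓ Uperp := ⟨hxU g, hperp'⟩
      rw [hcompl.inf_eq_bot] at this
      simpa using this
    · rintro rfl
      refine ⟨⟨0, map_zero P⟩, ?_⟩
      intro c _
      simp [TE]
  · -- not right multiplication
    rintro ⟨a, ha⟩
    obtain ⟨u, hu, hu0⟩ := Submodule.ne_bot_iff U |>.mp hU0
    have hUperp_ne : Uperp ≠ ⊥ := by
      intro h
      apply hU1
      have := hcompl.sup_eq_top
      rw [h, sup_bot_eq] at this
      exact this
    obtain ⟨w, hw, hw0⟩ := Submodule.ne_bot_iff Uperp |>.mp hUperp_ne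
    have key : ∀ c : K, π c = c * a.coeff 1 := by
      intro c
      have h1 := congrArg (fun z : MonoidAlgebra K G => z.coeff (1 : G))
        (ha (MonoidAlgebra.single (1 : G) c))
      simp only [hP] at h1
      rw [MonoidAlgebra.single_mul_apply] at h1
      simpa using h1
    have hu1 : a.coeff 1 = 1 := by
      have := key u
      rw [hπU u hu] at this
      have : u * 1 = u * a.coeff 1 := by rw [mul_one]; exact this
      exact (mul_left_cancel₀ hu0 this).symm
    have := key w
    rw [hπperp w hw, hu1, mul_one] at this
    exact hw0 this.symm
end
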